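/- arXiv:math/0411505 — 2 statements merged into one kernel-verified Lean document; each statement's English description precedes it below -/
import Mathlib

section
/- (Classical MacMahon Master Theorem / boson-fermion correspondence) For an r×r matrix A over a commutative ring, 1/det(I - A) = ∑_{n=0}^∞ tr S^n(A), where S^n(A) is the n-th symmetric power of A. -/
open scoped Classical

namespace MacMahonAux
open MvPolynomial


variable {S : Type*} [CommRing S] {s : ℕ}

/-- The algebra endomorphism `x_i ↦ ∑_j B i j • x_j`. -/
noncomputable def psi (B : Matrix (Fin s) (Fin s) S) :
    MvPolynomial (Fin s) S →ₐ[S] MvPolynomial (Fin s) S :=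
  aeval fun i => ∑ j, C (B i j) * X j

lemma psi_X (B : Matrix (Fin s) (Fin s) S) (i : Fin s) :
    psi B (X i) = ∑ j, C (B i j) * X j := by
  simp [psi]

/-- Multidegrees of total degree `n`. -/
noncomputable def Dset (s n : ℕ) : Finset (Fin s →₀ ℕ) :=
  (Finset.Nat.antidiagonalTuple s n).image (fun d => Finsupp.equivFunOnFinite.symm d)

lemma mem_Dset {n : ℕ} {e : Fin s →₀ ℕ} : e ∈ Dset s n ↔ ∑ i, e i = n := by
  constructor
  · rintro he
    obtain ⟨d, hd, rfl⟩ := Finset.mem_image.mp he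
    rw [Finset.Nat.mem_antidiagonalTuple] at hd
    simpa using hd
  · intro he
    refine Finset.mem_image.mpr ⟨Finsupp.equivFunOnFinite e, ?_, by simp⟩
    rw [Finset.Nat.mem_antidiagonalTuple]
    simpa using he

lemma degree_eq_sum_univ {ι : Type*} [Fintype ι] (e : ι →₀ ℕ) : e.degree = ∑ i, e i :=
  Finset.sum_subset (Finset.subset_univ _) (by
    intro x _ hx
    simpa [Finsupp.mem_support_iff] using hx)

lemma mem_Dset_degree {n : ℕ} {e : Fin s →₀ ℕ} : e ∈ Dset s n ↔ e.degree = n := by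
  rw [mem_Dset, degree_eq_sum_univ]

/-- `tr Sⁿ(B)`. -/
noncomputable def hmat (n : ℕ) (B : Matrix (Fin s) (Fin s) S) : S :=
  ∑ e ∈ Dset s n, coeff e (psi B (monomial e 1))

lemma psi_monomial (B : Matrix (Fin s) (Fin s) S) (e : Fin s →₀ ℕ) :
    psi B (monomial e 1) = ∏ i, (∑ j, C (B i j) * X j) ^ e i := by
  rw [psi, aeval_monomial, map_one, one_mul, Finsupp.prod_fintype]
  intro i; simp

lemma psi_monomial_isHomogeneous (B : Matrix (Fin s) (Fin s) S) (e : Fin s →₀ ℕ) :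
    (psi B (monomial e 1)).IsHomogeneous (∑ i, e i) := by
  rw [psi_monomial]
  have : ∀ i : Fin s, ((∑ j, C (B i j) * X j) ^ e i).IsHomogeneous (1 * e i) := by
    intro i
    exact (IsHomogeneous.sum Finset.univ _ 1 fun j _ => isHomogeneous_C_mul_X _ _).pow _
  simpa using IsHomogeneous.prod Finset.univ _ _ (fun i _ => this i)

lemma hmat_zero (B : Matrix (Fin s) (Fin s) S) : hmat 0 B = 1 := by
  have h0 : Dset s 0 = {0} := by
    ext e
    simp only [mem_Dset, Finset.mem_singleton]
    constructor
    · intro h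
      ext i
      exact Finset.sum_eq_zero_iff.mp h i (Finset.mem_univ i)
    · rintro rfl; simp
  rw [hmat, h0, Finset.sum_singleton]
  simp [monomial_zero', psi]



variable {S : Type*} [CommRing S] {s : ℕ}

lemma psi_C (B : Matrix (Fin s) (Fin s) S) (c : S) : psi B (C c) = C c := by
  simp [psi, algebraMap_eq]

lemma psi_monomial_eq_sum (B : Matrix (Fin s) (Fin s) S) (e : Fin s →₀ ℕ) :
    psi B (monomial e 1) =
      ∑ f ∈ Dset s (∑ i, e i), monomial f (coeff f (psi B (monomial e 1))) := by
  conv_lhs => rw [← (psi B (monomial e 1)).support_sum_monomial_coeff]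
  refine Finset.sum_subset ?_ ?_
  · intro f hf
    rw [mem_Dset_degree]
    by_contra h
    exact (mem_support_iff.mp hf) ((psi_monomial_isHomogeneous B e).coeff_eq_zero h)
  · intro f _ hf
    rw [notMem_support_iff.mp hf, monomial_zero]

noncomputable def Mm (n : ℕ) (B : Matrix (Fin s) (Fin s) S) :
    Matrix (Dset s n) (Dset s n) S :=
  Matrix.of fun d e => coeff (e : Fin s →₀ ℕ) (psi B (monomial (d : Fin s →₀ ℕ) 1))

lemma hmat_eq_trace (n : ℕ) (B : Matrix (Fin s) (Fin s) S) :
    hmat n B = Matrix.trace (Mm n B) := by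
  rw [hmat, Matrix.trace, ← Finset.sum_coe_sort (Dset s n)]
  rfl

lemma psi_psi (B Cm : Matrix (Fin s) (Fin s) S) (p : MvPolynomial (Fin s) S) :
    psi B (psi Cm p) = psi (Cm * B) p := by
  have : (psi B).comp (psi Cm) = psi (Cm * B) := by
    apply MvPolynomial.algHom_ext
    intro i
    rw [AlgHom.comp_apply, psi_X, map_sum]
    have h1 : ∀ x, psi B (C (Cm i x) * X x) = ∑ j, C (Cm i x * B x j) * X j := by
      intro x
      rw [map_mul, psi_C, psi_X, Finset.mul_sum]
      exact Finset.sum_congr rfl fun j _ => by rw [← mul_assoc, ← C_mul]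
    simp_rw [h1]
    rw [Finset.sum_comm, psi_X]
    refine Finset.sum_congr rfl fun j _ => ?_
    rw [← Finset.sum_mul, Matrix.mul_apply, map_sum]
  exact congrFun (congrArg DFunLike.coe this) p

lemma Mm_mul (n : ℕ) (B Cm : Matrix (Fin s) (Fin s) S) :
    Mm n (Cm * B) = Mm n Cm * Mm n B := by
  ext d e
  have hd : (∑ i, (d : Fin s →₀ ℕ) i) = n := mem_Dset.mp d.2
  rw [Matrix.mul_apply]
  show coeff (e : Fin s →₀ ℕ) (psi (Cm * B) (monomial (d : Fin s →₀ ℕ) 1)) = _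
  rw [← psi_psi B Cm, psi_monomial_eq_sum Cm d, hd, map_sum, coeff_sum,
    ← Finset.sum_coe_sort (Dset s n)]
  refine Finset.sum_congr rfl fun f _ => ?_
  rw [show (monomial (f : Fin s →₀ ℕ)) (coeff (f : Fin s →₀ ℕ) (psi Cm (monomial (d : Fin s →₀ ℕ) 1)))
      = C (coeff (f : Fin s →₀ ℕ) (psi Cm (monomial (d : Fin s →₀ ℕ) 1))) * monomial (f : Fin s →₀ ℕ) 1
    from by rw [C_mul_monomial, mul_one], map_mul, psi_C, coeff_C_mul]
  rfl

lemma Mm_one (n : ℕ) : Mm n (1 : Matrix (Fin s) (Fin s) S) = 1 := by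
  have hpsi : ∀ p, psi (1 : Matrix (Fin s) (Fin s) S) p = p := by
    intro p
    have : psi (1 : Matrix (Fin s) (Fin s) S) = AlgHom.id S _ := by
      apply MvPolynomial.algHom_ext
      intro i
      simp [psi_X, Matrix.one_apply, apply_ite (C : S → MvPolynomial (Fin s) S),
        ite_mul]
    rw [this]; rfl
  ext d e
  rw [Mm, Matrix.of_apply, hpsi, coeff_monomial, Matrix.one_apply]
  exact if_congr Subtype.ext_iff.symm rfl rfl

lemma hmat_conj (n : ℕ) (B P Q : Matrix (Fin s) (Fin s) S)
    (h2 : Q * P = 1) : hmat n (P * B * Q) = hmat n B := by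
  rw [hmat_eq_trace, hmat_eq_trace, Mm_mul, Mm_mul, Matrix.trace_mul_comm,
    ← Matrix.mul_assoc, ← Mm_mul, h2, Mm_one, Matrix.one_mul]

lemma map_psi {S' : Type*} [CommRing S'] (f : S →+* S') (B : Matrix (Fin s) (Fin s) S)
    (p : MvPolynomial (Fin s) S) :
    MvPolynomial.map f (psi B p) = psi (B.map f) (MvPolynomial.map f p) := by
  have : ((MvPolynomial.map f).comp (psi B).toRingHom) =
      ((psi (B.map f)).toRingHom.comp (MvPolynomial.map f)) := by
    apply MvPolynomial.ringHom_ext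
    · intro r
      simp [psi_C, map_C]
    · intro i
      simp [psi_X, map_X, Matrix.map_apply]
  exact congrFun (congrArg DFunLike.coe this) p

lemma hmat_map {S' : Type*} [CommRing S'] (f : S →+* S') (n : ℕ)
    (B : Matrix (Fin s) (Fin s) S) : f (hmat n B) = hmat n (B.map f) := by
  rw [hmat, hmat, map_sum]
  refine Finset.sum_congr rfl fun e _ => ?_
  rw [← coeff_map, map_psi, map_monomial, map_one]


section Block

variable {S : Type*} [CommRing S] {s : ℕ}

/-- tail of a finsupp on `Fin (s+1)`. -/
noncomputable def ftail (e : Fin (s + 1) →₀ ℕ) : Fin s →₀ ℕ :=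
  Finsupp.equivFunOnFinite.symm fun i => e i.succ

@[simp] lemma ftail_apply (e : Fin (s + 1) →₀ ℕ) (i : Fin s) : ftail e i = e i.succ := rfl

lemma single_add_mapDomain_ftail (e : Fin (s + 1) →₀ ℕ) :
    Finsupp.single 0 (e 0) + (ftail e).mapDomain Fin.succ = e := by
  ext i
  refine Fin.cases ?_ (fun j => ?_) i
  · rw [Finsupp.add_apply, Finsupp.single_eq_same,
      Finsupp.mapDomain_notin_range _ _ (by simp [Fin.succ_ne_zero]), add_zero]
  · rw [Finsupp.add_apply, Finsupp.single_eq_of_ne' (Fin.succ_ne_zero j).symm,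
      Finsupp.mapDomain_apply (Fin.succ_injective s), ftail_apply, zero_add]

variable (B : Matrix (Fin (s + 1)) (Fin (s + 1)) S)

lemma key_coeff (hB : ∀ i : Fin s, B i.succ 0 = 0) (e : Fin (s + 1) →₀ ℕ) :
    coeff e (psi B (monomial e 1)) =
      B 0 0 ^ e 0 *
        coeff (ftail e) (psi (Matrix.of fun i j : Fin s => B i.succ j.succ)
          (monomial (ftail e) 1)) := by
  set B' : Matrix (Fin s) (Fin s) S := Matrix.of fun i j : Fin s => B i.succ j.succ with hB'
  set ℓ : MvPolynomial (Fin s) S := ∑ j, C (B 0 j.succ) * X j with hℓ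
  -- the rows with index ≥ 1 only involve renamed variables
  have hrow : ∀ i : Fin s, (∑ j, C (B i.succ j) * X j : MvPolynomial (Fin (s+1)) S) =
      rename Fin.succ (∑ j, C (B' i j) * X j) := by
    intro i
    rw [Fin.sum_univ_succ, hB i, map_zero, zero_mul, zero_add, map_sum]
    refine Finset.sum_congr rfl fun j _ => ?_
    rw [map_mul, rename_C, rename_X]
    rfl
  have hrow0 : (∑ j, C (B 0 j) * X j : MvPolynomial (Fin (s+1)) S) =
      C (B 0 0) * X 0 + rename Fin.succ ℓ := by
    rw [Fin.sum_univ_succ, hℓ, map_sum]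
    congr 1
    refine Finset.sum_congr rfl fun j _ => ?_
    rw [map_mul, rename_C, rename_X]
  have hQ : psi B' (monomial (ftail e) 1) = ∏ i : Fin s, (∑ j, C (B' i j) * X j) ^ e i.succ := by
    rw [psi_monomial]
    exact Finset.prod_congr rfl fun i _ => by rw [ftail_apply]
  rw [psi_monomial, Fin.prod_univ_succ, hrow0]
  have hprod : (∏ i : Fin s, (∑ j, C (B i.succ j) * X j) ^ e i.succ) =
      rename Fin.succ (psi B' (monomial (ftail e) 1)) := by
    rw [hQ, map_prod]
    exact Finset.prod_congr rfl fun i _ => by rw [hrow i, map_pow]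
  rw [hprod, add_pow, Finset.sum_mul, coeff_sum]
  set Q := psi B' (monomial (ftail e) 1) with hQdef
  have hstep : ∀ k ∈ Finset.range (e 0 + 1),
      coeff e ((C (B 0 0) * X 0) ^ k * (rename Fin.succ ℓ) ^ (e 0 - k) *
        (((e 0).choose k : ℕ) : MvPolynomial (Fin (s+1)) S) * rename Fin.succ Q) =
      if k = e 0 then B 0 0 ^ e 0 * coeff (ftail e) Q else 0 := by
    intro k hk
    have hk' : k ≤ e 0 := Nat.lt_succ_iff.mp (Finset.mem_range.mp hk)
    have hmono : (C (B 0 0) * X 0 : MvPolynomial (Fin (s+1)) S) ^ k =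
        monomial (Finsupp.single 0 k) (B 0 0 ^ k) := by
      rw [mul_pow, ← C_pow, X_pow_eq_monomial, C_mul_monomial, mul_one]
    have hre : ∀ W : MvPolynomial (Fin s) S,
        (rename Fin.succ ℓ) ^ (e 0 - k) * rename Fin.succ W =
          rename Fin.succ (ℓ ^ (e 0 - k) * W) := fun W => by rw [map_mul, map_pow]
    have hcast : ((((e 0).choose k : ℕ)) : MvPolynomial (Fin (s+1)) S) =
        C (((e 0).choose k : ℕ) : S) := by
      rw [map_natCast (C : S →+* MvPolynomial (Fin (s+1)) S)]
    rw [mul_comm _ ((((e 0).choose k : ℕ)) : MvPolynomial (Fin (s+1)) S), mul_assoc, mul_assoc,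
      hre, hmono, hcast, coeff_C_mul, coeff_monomial_mul',
      if_pos (Finsupp.single_le_iff.mpr hk')]
    rcases eq_or_lt_of_le hk' with hke | hke
    · subst hke
      rw [if_pos rfl, Nat.sub_self, pow_zero, one_mul, Nat.choose_self, Nat.cast_one, one_mul]
      have hsub : e - Finsupp.single 0 (e 0) = (ftail e).mapDomain Fin.succ :=
        (eq_tsub_of_add_eq ((add_comm _ _).trans (single_add_mapDomain_ftail e))).symm
      rw [hsub, coeff_rename_mapDomain _ (Fin.succ_injective s)]
    · rw [if_neg (Nat.ne_of_lt hke)]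
      have : coeff (e - Finsupp.single 0 k) (rename Fin.succ (ℓ ^ (e 0 - k) * Q)) = 0 := by
        apply coeff_rename_eq_zero
        intro u hu
        exfalso
        have h0 := DFunLike.congr_fun hu (0 : Fin (s + 1))
        rw [Finsupp.mapDomain_notin_range _ _ (by simp [Fin.succ_ne_zero]),
          Finsupp.tsub_apply, Finsupp.single_eq_same] at h0
        exact (Nat.sub_ne_zero_of_lt hke) h0.symm
      rw [this, mul_zero, mul_zero]
  rw [Finset.sum_congr rfl hstep, Finset.sum_ite_eq' (Finset.range (e 0 + 1))]
  rw [if_pos (Finset.self_mem_range_succ (e 0))]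

lemma hmat_block (hB : ∀ i : Fin s, B i.succ 0 = 0) (n : ℕ) :
    hmat n B = ∑ p ∈ Finset.HasAntidiagonal.antidiagonal n,
      B 0 0 ^ p.1 * hmat p.2 (Matrix.of fun i j : Fin s => B i.succ j.succ) := by
  set B' : Matrix (Fin s) (Fin s) S := Matrix.of fun i j : Fin s => B i.succ j.succ with hB'
  rw [hmat]
  simp_rw [hmat, Finset.mul_sum]
  rw [Finset.sum_sigma']
  refine Finset.sum_nbij'
    (fun e => ⟨(e 0, ∑ i : Fin s, ftail e i), ftail e⟩)
    (fun x => Finsupp.single 0 x.1.1 + (x.2).mapDomain Fin.succ) ?_ ?_ ?_ ?_ ?_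
  · intro e he
    refine Finset.mem_sigma.mpr ⟨Finset.HasAntidiagonal.mem_antidiagonal.mpr ?_, mem_Dset.mpr rfl⟩
    rw [← mem_Dset.mp he, Fin.sum_univ_succ]
    simp
  · intro x hx
    obtain ⟨hx1, hx2⟩ := Finset.mem_sigma.mp hx
    rw [mem_Dset, Fin.sum_univ_succ]
    have h0 : (Finsupp.single (0 : Fin (s+1)) x.1.1 + (x.2).mapDomain Fin.succ) 0 = x.1.1 := by
      rw [Finsupp.add_apply, Finsupp.single_eq_same,
        Finsupp.mapDomain_notin_range _ _ (by simp [Fin.succ_ne_zero]), add_zero]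
    have hsucc : ∀ j : Fin s,
        (Finsupp.single (0 : Fin (s+1)) x.1.1 + (x.2).mapDomain Fin.succ) j.succ = x.2 j := by
      intro j
      rw [Finsupp.add_apply, Finsupp.single_eq_of_ne' (Fin.succ_ne_zero j).symm,
        Finsupp.mapDomain_apply (Fin.succ_injective s), zero_add]
    rw [h0]
    calc x.1.1 + ∑ i : Fin s,
          (Finsupp.single (0 : Fin (s+1)) x.1.1 + (x.2).mapDomain Fin.succ) i.succ
        = x.1.1 + ∑ i : Fin s, x.2 i := by rw [Finset.sum_congr rfl fun i _ => hsucc i]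
      _ = x.1.1 + x.1.2 := by rw [mem_Dset.mp hx2]
      _ = n := Finset.HasAntidiagonal.mem_antidiagonal.mp hx1
  · intro e he
    exact single_add_mapDomain_ftail e
  · intro x hx
    obtain ⟨hx1, hx2⟩ := Finset.mem_sigma.mp hx
    have h0 : (Finsupp.single (0 : Fin (s+1)) x.1.1 + (x.2).mapDomain Fin.succ) 0 = x.1.1 := by
      rw [Finsupp.add_apply, Finsupp.single_eq_same,
        Finsupp.mapDomain_notin_range _ _ (by simp [Fin.succ_ne_zero]), add_zero]
    have htail : ftail (Finsupp.single 0 x.1.1 + (x.2).mapDomain Fin.succ) = x.2 := by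
      ext j
      rw [ftail_apply, Finsupp.add_apply, Finsupp.single_eq_of_ne' (Fin.succ_ne_zero j).symm,
        Finsupp.mapDomain_apply (Fin.succ_injective s), zero_add]
    have hfst : (((Finsupp.single (0 : Fin (s+1)) x.1.1 + (x.2).mapDomain Fin.succ)) 0,
        ∑ i : Fin s, ftail (Finsupp.single 0 x.1.1 + (x.2).mapDomain Fin.succ) i) = x.1 := by
      rw [htail, mem_Dset.mp hx2, h0]
    exact Sigma.ext hfst (heq_of_eq htail)
  · intro e he
    rw [key_coeff B hB e]

end Block

section Numeric

variable {K : Type*} [Field K] {s : ℕ}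

/-- `det (1 - X • B)` as a polynomial. -/
noncomputable def detp (B : Matrix (Fin s) (Fin s) K) : Polynomial K :=
  Matrix.det (1 - (Polynomial.X : Polynomial K) • B.map Polynomial.C)

lemma detp_conj (B P Q : Matrix (Fin s) (Fin s) K) (h1 : P * Q = 1) (h2 : Q * P = 1) :
    detp (P * B * Q) = detp B := by
  have key : P.map (Polynomial.C : K →+* Polynomial K) *
        (1 - (Polynomial.X : Polynomial K) • B.map Polynomial.C) * Q.map Polynomial.C =
      (1 - (Polynomial.X : Polynomial K) • (P * B * Q).map Polynomial.C) := by
    rw [Matrix.mul_sub, Matrix.mul_one, Matrix.sub_mul, ← Matrix.map_mul, h1,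
      Matrix.map_one _ (map_zero _) (map_one _), Matrix.mul_smul, Matrix.smul_mul,
      ← Matrix.map_mul, ← Matrix.map_mul]
  rw [detp, detp, ← key, Matrix.det_mul, Matrix.det_mul, mul_right_comm, ← Matrix.det_mul,
    ← Matrix.map_mul, h1, Matrix.map_one _ (map_zero _) (map_one _), Matrix.det_one, one_mul]

lemma detp_block (B : Matrix (Fin (s + 1)) (Fin (s + 1)) K)
    (hB : ∀ i : Fin s, B i.succ 0 = 0) :
    detp B = (1 - Polynomial.C (B 0 0) * Polynomial.X) *
      detp (Matrix.of fun i j : Fin s => B i.succ j.succ) := by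
  set A : Matrix (Fin (s+1)) (Fin (s+1)) (Polynomial K) :=
    1 - (Polynomial.X : Polynomial K) • B.map Polynomial.C with hA
  have hcol : ∀ i : Fin s, A i.succ 0 = 0 := by
    intro i
    simp [hA, Matrix.one_apply, Fin.succ_ne_zero, hB i]
  rw [detp, ← hA, Matrix.det_succ_column_zero, Finset.sum_eq_single 0]
  · have h00 : A 0 0 = 1 - Polynomial.C (B 0 0) * Polynomial.X := by
      rw [hA, Matrix.sub_apply, Matrix.one_apply_eq, Matrix.smul_apply, Matrix.map_apply,
        smul_eq_mul, mul_comm]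
    rw [h00]
    have hsub : A.submatrix (Fin.succAbove 0) Fin.succ =
        1 - (Polynomial.X : Polynomial K) •
          (Matrix.of fun i j : Fin s => B i.succ j.succ).map Polynomial.C := by
      ext i j
      rw [Matrix.submatrix_apply, Fin.zero_succAbove]
      simp [hA, Matrix.one_apply, Fin.succ_inj]
    rw [hsub, Fin.val_zero, pow_zero, one_mul]
    rfl
  · intro i _ hi
    obtain ⟨j, rfl⟩ := Fin.exists_succ_eq.mpr hi
    simp [hcol j]
  · intro h
    exact absurd (Finset.mem_univ 0) h

lemma geom_inv (μ : K) :
    (1 - PowerSeries.C μ * PowerSeries.X) * PowerSeries.mk (fun n => μ ^ n) = 1 := by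
  ext n
  rw [sub_mul, one_mul, map_sub, PowerSeries.coeff_one]
  cases n with
  | zero =>
    rw [mul_assoc, PowerSeries.coeff_C_mul]
    simp [PowerSeries.coeff_zero_eq_constantCoeff]
  | succ n =>
    rw [mul_assoc, PowerSeries.coeff_C_mul, PowerSeries.coeff_succ_X_mul,
      PowerSeries.coeff_mk, PowerSeries.coeff_mk, if_neg (Nat.succ_ne_zero n)]
    ring

end Numeric

section Eigen

variable {K : Type*} [Field K] [IsAlgClosed K] {s : ℕ}

lemma exists_conj_form (B : Matrix (Fin (s + 1)) (Fin (s + 1)) K) :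
    ∃ P Q : Matrix (Fin (s + 1)) (Fin (s + 1)) K,
      P * Q = 1 ∧ Q * P = 1 ∧ ∀ i : Fin s, (Q * B * P) i.succ 0 = 0 := by
  -- get an eigenvector
  obtain ⟨μ, hμ⟩ := Module.End.exists_eigenvalue (Matrix.mulVecLin B)
  obtain ⟨v, hv⟩ := hμ.exists_hasEigenvector
  have hvec : B.mulVec v = μ • v := hv.apply_eq_smul
  have hv0 : v ≠ 0 := hv.right
  obtain ⟨i0, hi0⟩ : ∃ i0, v i0 ≠ 0 := by
    by_contra h
    push_neg at h
    exact hv0 (funext h)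
  -- a permutation sending 0 to i0 and j.succ to i0.succAbove j
  set ρ : Equiv.Perm (Fin (s + 1)) := (finSuccEquiv s).trans (finSuccEquiv' i0).symm with hρ
  have hρ0 : ρ 0 = i0 := by simp [hρ]
  have hρsucc : ∀ j : Fin s, ρ j.succ = i0.succAbove j := by intro j; simp [hρ]
  -- the base-change matrix
  set Q0 : Matrix (Fin (s + 1)) (Fin (s + 1)) K :=
    Matrix.of fun k j => Fin.cases (v (ρ k)) (fun j' : Fin s => if k = Fin.succ j' then 1 else 0) j
    with hQ0
  have hQ0det : Q0.det = v i0 := by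
    rw [Matrix.det_succ_row_zero, Finset.sum_eq_single 0]
    · have hQ000 : Q0 0 0 = v i0 := by simp [hQ0, hρ0]
      have hsub : Q0.submatrix Fin.succ (Fin.succAbove 0) = 1 := by
        ext i j
        rw [Matrix.submatrix_apply, Fin.zero_succAbove]
        simp [hQ0, Matrix.one_apply, Fin.succ_inj, eq_comm]
      rw [hQ000, hsub, Matrix.det_one]
      simp
    · intro j _ hj
      obtain ⟨j', rfl⟩ := Fin.exists_succ_eq.mpr hj
      have : Q0 0 j'.succ = 0 := by
        simp [hQ0, (Fin.succ_ne_zero j').symm]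
      simp [this]
    · intro h
      exact absurd (Finset.mem_univ 0) h
  set P : Matrix (Fin (s + 1)) (Fin (s + 1)) K := Q0.submatrix ρ.symm id with hP
  have hPdet : IsUnit P.det := by
    have hdet : P.det = ((Equiv.Perm.sign ρ.symm : ℤ) : K) * Q0.det := by
      rw [hP]
      exact Matrix.det_permute ρ.symm Q0
    rw [hdet, hQ0det]
    refine IsUnit.mul ?_ (isUnit_iff_ne_zero.mpr hi0)
    rcases Int.units_eq_one_or (Equiv.Perm.sign ρ.symm) with h | h <;> rw [h] <;> simp
  have hPcol : ∀ i, P i 0 = v i := by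
    intro i
    rw [hP]
    show Q0 (ρ.symm i) 0 = v i
    rw [hQ0]
    show v (ρ (ρ.symm i)) = v i
    rw [Equiv.apply_symm_apply]
  refine ⟨P, P⁻¹, Matrix.mul_nonsing_inv P hPdet, Matrix.nonsing_inv_mul P hPdet, ?_⟩
  intro i
  have hBP : ∀ k, (B * P) k 0 = μ * P k 0 := by
    intro k
    rw [Matrix.mul_apply]
    have : ∑ l, B k l * P l 0 = B.mulVec v k := by
      simp only [Matrix.mulVec, dotProduct]
      exact Finset.sum_congr rfl fun l _ => by rw [hPcol l]
    rw [this, hvec, Pi.smul_apply, smul_eq_mul, hPcol k]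
  have : (P⁻¹ * B * P) i.succ 0 = μ * (P⁻¹ * P) i.succ 0 := by
    rw [Matrix.mul_assoc, Matrix.mul_apply, Matrix.mul_apply, Finset.mul_sum]
    exact Finset.sum_congr rfl fun k _ => by rw [hBP k]; ring
  rw [this, Matrix.nonsing_inv_mul P hPdet, Matrix.one_apply_ne (Fin.succ_ne_zero i), mul_zero]

set_option maxHeartbeats 1000000 in
theorem num_identity : ∀ (s : ℕ) (B : Matrix (Fin s) (Fin s) K),
    ((detp B : Polynomial K) : PowerSeries K) * PowerSeries.mk (fun n => hmat n B) = 1 := by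
  intro s
  induction s with
  | zero =>
    intro B
    have h1 : detp B = 1 := Matrix.det_fin_zero
    have h2 : PowerSeries.mk (fun n => hmat n B) = 1 := by
      ext n
      cases n with
      | zero => simp [hmat_zero]
      | succ n =>
        have : Dset 0 (n+1) = ∅ := by
          rw [Finset.eq_empty_iff_forall_notMem]
          intro e he
          rw [mem_Dset] at he
          simp at he
        rw [PowerSeries.coeff_mk, hmat, this, Finset.sum_empty]
        simp
    rw [h1, h2, mul_one, Polynomial.coe_one]
  | succ s IH =>
    intro B
    obtain ⟨P, Q, hPQ, hQP, hzero⟩ := exists_conj_form B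
    set B₁ := Q * B * P with hB₁
    have hdet : detp B = detp B₁ := by
      rw [hB₁, detp_conj B Q P hQP hPQ]
    have hh : ∀ n, hmat n B = hmat n B₁ := by
      intro n
      rw [hB₁, hmat_conj n B Q P hPQ]
    set B' : Matrix (Fin s) (Fin s) K := Matrix.of fun i j : Fin s => B₁ i.succ j.succ with hB'
    have hdet2 : detp B₁ = (1 - Polynomial.C (B₁ 0 0) * Polynomial.X) * detp B' :=
      detp_block B₁ hzero
    have hmk : PowerSeries.mk (fun n => hmat n B₁) =
        PowerSeries.mk (fun n => B₁ 0 0 ^ n) * PowerSeries.mk (fun n => hmat n B') := by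
      ext n
      rw [PowerSeries.coeff_mk, PowerSeries.coeff_mul, hmat_block B₁ hzero n]
      exact Finset.sum_congr rfl fun p _ => by rw [PowerSeries.coeff_mk, PowerSeries.coeff_mk]
    have hgeom : ((1 - Polynomial.C (B₁ 0 0) * Polynomial.X : Polynomial K) : PowerSeries K) *
        PowerSeries.mk (fun n => B₁ 0 0 ^ n) = 1 := by
      rw [← geom_inv (B₁ 0 0)]
      congr 1
      rw [Polynomial.coe_sub, Polynomial.coe_one, Polynomial.coe_mul, Polynomial.coe_C,
        Polynomial.coe_X]
    calc ((detp B : Polynomial K) : PowerSeries K) * PowerSeries.mk (fun n => hmat n B)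
        = ((detp B₁ : Polynomial K) : PowerSeries K) * PowerSeries.mk (fun n => hmat n B₁) := by
          rw [hdet]
          refine congrArg (_ * ·) ?_
          ext n
          rw [PowerSeries.coeff_mk, PowerSeries.coeff_mk, hh n]
      _ = (((1 - Polynomial.C (B₁ 0 0) * Polynomial.X : Polynomial K) : PowerSeries K) *
            PowerSeries.mk (fun n => B₁ 0 0 ^ n)) *
          (((detp B' : Polynomial K) : PowerSeries K) * PowerSeries.mk (fun n => hmat n B')) := by
          rw [hdet2, Polynomial.coe_mul, hmk, mul_mul_mul_comm]
      _ = 1 := by rw [hgeom, IH B', one_mul]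

end Eigen

section Homog

variable {F : Type*} [CommRing F] {τ : Type*} {s : ℕ}

/-- all coefficients (in the inner polynomial ring) are homogeneous of degree `n`. -/
def CoeffHom (n : ℕ) (Q : MvPolynomial (Fin s) (MvPolynomial τ F)) : Prop :=
  ∀ e : Fin s →₀ ℕ, (coeff e Q).IsHomogeneous n

lemma CoeffHom.mul {n m : ℕ} {Q Q' : MvPolynomial (Fin s) (MvPolynomial τ F)}
    (h : CoeffHom n Q) (h' : CoeffHom m Q') : CoeffHom (n + m) (Q * Q') := by
  intro e
  rw [coeff_mul]
  exact IsHomogeneous.sum _ _ _ fun p _ => (h p.1).mul (h' p.2)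

lemma CoeffHom.one : CoeffHom (F := F) (τ := τ) (s := s) 0 1 := by
  intro e
  rw [coeff_one]
  split
  · exact isHomogeneous_one _ _
  · exact isHomogeneous_zero _ _ _

lemma CoeffHom.pow {n : ℕ} {Q : MvPolynomial (Fin s) (MvPolynomial τ F)}
    (h : CoeffHom n Q) (k : ℕ) : CoeffHom (n * k) (Q ^ k) := by
  induction k with
  | zero => simpa using CoeffHom.one
  | succ k IH =>
    rw [pow_succ, show n * (k + 1) = n * k + n by ring]
    exact IH.mul h

lemma CoeffHom.prod {ι : Type*} (t : Finset ι) (f : ι → MvPolynomial (Fin s) (MvPolynomial τ F))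
    (n : ι → ℕ) (h : ∀ i ∈ t, CoeffHom (n i) (f i)) :
    CoeffHom (∑ i ∈ t, n i) (∏ i ∈ t, f i) := by
  induction t using Finset.cons_induction with
  | empty => simpa using CoeffHom.one
  | cons a t ha IH =>
    rw [Finset.sum_cons, Finset.prod_cons]
    exact (h a (Finset.mem_cons_self a t)).mul (IH fun i hi => h i (Finset.mem_cons_of_mem hi))

/-- For a matrix with degree-1 homogeneous entries, `hmat n` is homogeneous of degree `n`. -/
lemma hmat_isHomogeneous (B : Matrix (Fin s) (Fin s) (MvPolynomial τ F))
    (hB : ∀ i j, (B i j).IsHomogeneous 1) (n : ℕ) :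
    (hmat n B).IsHomogeneous n := by
  refine IsHomogeneous.sum _ _ _ fun e he => ?_
  have hrow : ∀ i : Fin s, CoeffHom (F := F) 1 (∑ j, C (B i j) * X j) := by
    intro i e'
    rw [coeff_sum]
    refine IsHomogeneous.sum _ _ _ fun j _ => ?_
    rw [coeff_C_mul, coeff_X']
    split
    · simpa using hB i j
    · simpa using isHomogeneous_zero _ _ _
  have : CoeffHom (F := F) (∑ i, e i * 1) (∏ i, (∑ j, C (B i j) * X j) ^ e i) := by
    refine CoeffHom.prod Finset.univ _ _ fun i _ => ?_
    rw [mul_comm]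
    exact (hrow i).pow (e i)
  rw [psi_monomial]
  have heq : (∑ i, e i * 1) = n := by
    rw [← mem_Dset.mp he]
    simp
  rw [← heq]
  exact this e

/-- Scaling: the image of a homogeneous polynomial under `t ↦ C (v t) * X`. -/
lemma scale_eval {E : Type*} [CommRing E] (f : F →+* E) (v : τ → E)
    {P : MvPolynomial τ F} {k : ℕ} (hP : P.IsHomogeneous k) :
    eval₂ ((Polynomial.C : E →+* Polynomial E).comp f)
        (fun t => Polynomial.C (v t) * Polynomial.X) P =
      Polynomial.C (eval₂ f v P) * Polynomial.X ^ k := by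
  conv_lhs => rw [P.as_sum]
  conv_rhs => rw [P.as_sum]
  rw [eval₂_sum, eval₂_sum, map_sum, Finset.sum_mul]
  refine Finset.sum_congr rfl fun d hd => ?_
  have hdeg : d.degree = k := by
    rw [Finsupp.degree_eq_weight_one]
    exact hP (mem_support_iff.mp hd)
  rw [eval₂_monomial, eval₂_monomial, RingHom.comp_apply]
  have hprod : (d.prod fun t e => (Polynomial.C (v t) * Polynomial.X) ^ e) =
      Polynomial.C (d.prod fun t e => v t ^ e) * Polynomial.X ^ k := by
    rw [Finsupp.prod, Finsupp.prod, ← hdeg]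
    simp_rw [mul_pow, ← Polynomial.C_pow]
    rw [Finset.prod_mul_distrib, ← map_prod, Finset.prod_pow_eq_pow_sum]
    rfl
  rw [hprod, ← mul_assoc, ← map_mul]

end Homog

section Bridge

variable {S : Type*} [CommRing S] {s : ℕ}

lemma trS_eq_hmat (B : Matrix (Fin s) (Fin s) S) (n : ℕ) :
    ∑ d ∈ Finset.univ.filter (fun d : Fin s → Fin (n + 1) => ∑ i, (d i : ℕ) = n),
        coeff (Finsupp.equivFunOnFinite.symm fun i => (d i : ℕ))
          (psi B (monomial (Finsupp.equivFunOnFinite.symm fun i => (d i : ℕ)) 1)) =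
      hmat n B := by
  rw [hmat]
  refine Finset.sum_nbij' (fun d => Finsupp.equivFunOnFinite.symm fun i => (d i : ℕ))
    (fun e i => (⟨e i % (n + 1), Nat.mod_lt _ (Nat.succ_pos n)⟩ : Fin (n + 1)))
    ?_ ?_ ?_ ?_ ?_
  · intro d hd
    rw [mem_Dset]
    simpa using (Finset.mem_filter.mp hd).2
  · intro e he
    simp only [Finset.mem_filter, Finset.mem_univ, true_and]
    have hle : ∀ i, e i ≤ n := fun i => by
      rw [← mem_Dset.mp he]
      exact Finset.single_le_sum (fun _ _ => Nat.zero_le _) (Finset.mem_univ i)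
    calc ∑ i, ((⟨e i % (n + 1), Nat.mod_lt _ (Nat.succ_pos n)⟩ : Fin (n + 1)) : ℕ)
        = ∑ i, e i := Finset.sum_congr rfl fun i _ =>
          Nat.mod_eq_of_lt (Nat.lt_succ_of_le (hle i))
      _ = n := mem_Dset.mp he
  · intro d hd
    funext i
    exact Fin.ext (by simp [Nat.mod_eq_of_lt (d i).isLt])
  · intro e he
    have hle : ∀ i, e i ≤ n := fun i => by
      rw [← mem_Dset.mp he]
      exact Finset.single_le_sum (fun _ _ => Nat.zero_le _) (Finset.mem_univ i)
    ext i
    simp [Nat.mod_eq_of_lt (Nat.lt_succ_of_le (hle i))]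
  · intro d hd
    rfl

lemma num_coeff {K : Type*} [Field K] [IsAlgClosed K] {s : ℕ}
    (B : Matrix (Fin s) (Fin s) K) (N : ℕ) :
    ∑ k ∈ Finset.range (N + 1), (detp B).coeff k * hmat (N - k) B =
      if N = 0 then 1 else 0 := by
  have h := congr_arg (PowerSeries.coeff N) (num_identity s B)
  rw [PowerSeries.coeff_mul, Finset.Nat.sum_antidiagonal_eq_sum_range_succ_mk] at h
  simp only [Polynomial.coeff_coe, PowerSeries.coeff_mk, PowerSeries.coeff_one] at h
  exact h

end Bridge

section Generic

variable {r : ℕ}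

noncomputable def Agen (r : ℕ) : Matrix (Fin r) (Fin r) (MvPolynomial (Fin r × Fin r) ℚ) :=
  fun i j => X (i, j)

noncomputable def Dgen (r : ℕ) : MvPolynomial (Fin r × Fin r) ℚ := (1 - Agen r).det

lemma Agen_hom (r : ℕ) : ∀ i j, ((Agen r) i j).IsHomogeneous 1 := fun _ _ =>
  isHomogeneous_X _ _

lemma coeff_zero_Dgen (r : ℕ) : coeff 0 (Dgen r) = 1 := by
  have h : constantCoeff (Dgen r) = 1 := by
    rw [Dgen, RingHom.map_det, RingHom.mapMatrix_apply]
    have : (1 - Agen r).map (constantCoeff : MvPolynomial (Fin r × Fin r) ℚ →+* ℚ) = 1 := by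
      ext i j
      rw [Matrix.map_apply, Matrix.sub_apply, map_sub]
      simp [Agen, Matrix.one_apply, apply_ite (constantCoeff : MvPolynomial (Fin r × Fin r) ℚ →+* ℚ)]
    rw [this, Matrix.det_one]
  rw [← h]
  rfl

variable {K : Type*} [Field K] [IsAlgClosed K] [CharZero K]

lemma evB_homComp (x : Fin r × Fin r → K) (k : ℕ) :
    eval₂ (algebraMap ℚ K) x (homogeneousComponent k (Dgen r)) =
      (detp (Matrix.of fun i j => x (i, j))).coeff k := by
  set Bx : Matrix (Fin r) (Fin r) K := Matrix.of fun i j => x (i, j) with hBx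
  have h1 : detp Bx = eval₂ ((Polynomial.C : K →+* Polynomial K).comp (algebraMap ℚ K))
      (fun p => Polynomial.C (x p) * Polynomial.X) (Dgen r) := by
    rw [Dgen, show (eval₂ ((Polynomial.C : K →+* Polynomial K).comp (algebraMap ℚ K))
        (fun p => Polynomial.C (x p) * Polynomial.X)) = ⇑(eval₂Hom ((Polynomial.C : K →+* Polynomial K).comp (algebraMap ℚ K))
        (fun p => Polynomial.C (x p) * Polynomial.X)) from rfl, RingHom.map_det,
      RingHom.mapMatrix_apply]
    rw [detp]
    congr 1
    refine Matrix.ext fun i j => ?_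
    simp only [Matrix.sub_apply, map_sub, Matrix.smul_apply, Matrix.map_apply, Matrix.of_apply,
      smul_eq_mul]
    congr 1
    · simp [Matrix.one_apply, apply_ite (eval₂Hom ((Polynomial.C : K →+* Polynomial K).comp
        (algebraMap ℚ K)) (fun p => Polynomial.C (x p) * Polynomial.X))]
    · rw [show (Agen r) i j = X (i, j) from rfl, eval₂Hom_X', mul_comm]
      rfl
  have hg : detp Bx = ∑ j ∈ Finset.range ((Dgen r).totalDegree + 1),
      Polynomial.C (eval₂ (algebraMap ℚ K) x (homogeneousComponent j (Dgen r))) *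
        Polynomial.X ^ j := by
    rw [h1]
    conv_lhs => rw [← sum_homogeneousComponent (Dgen r)]
    rw [show (eval₂ ((Polynomial.C : K →+* Polynomial K).comp (algebraMap ℚ K))
        (fun p => Polynomial.C (x p) * Polynomial.X)) = ⇑(eval₂Hom ((Polynomial.C : K →+* Polynomial K).comp (algebraMap ℚ K))
        (fun p => Polynomial.C (x p) * Polynomial.X)) from rfl, map_sum]
    exact Finset.sum_congr rfl fun j _ =>
      scale_eval (algebraMap ℚ K) x (homogeneousComponent_isHomogeneous j (Dgen r))
  symm
  rw [hg, Polynomial.finset_sum_coeff]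
  simp only [Polynomial.coeff_C_mul, Polynomial.coeff_X_pow, mul_ite, mul_one, mul_zero]
  rw [Finset.sum_ite_eq]
  split_ifs with hk
  · rfl
  · rw [homogeneousComponent_eq_zero, eval₂_zero]
    rw [Finset.mem_range, not_lt] at hk
    omega

end Generic

section WEq

variable {r : ℕ}

lemma W_eq (r N : ℕ) (hN : N ≠ 0) :
    ∑ k ∈ Finset.range (N + 1),
      homogeneousComponent k (Dgen r) * hmat (N - k) (Agen r) = 0 := by
  set K := AlgebraicClosure ℚ
  refine MvPolynomial.map_injective (algebraMap ℚ K) (algebraMap ℚ K).injective ?_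
  rw [map_zero]
  apply MvPolynomial.funext
  intro x
  rw [map_sum, map_sum]
  have hterm : ∀ k ∈ Finset.range (N + 1),
      eval x (MvPolynomial.map (algebraMap ℚ K)
          (homogeneousComponent k (Dgen r) * hmat (N - k) (Agen r))) =
        (detp (Matrix.of fun i j => x (i, j))).coeff k *
          hmat (N - k) (Matrix.of fun i j => x (i, j)) := by
    intro k _
    rw [map_mul, map_mul]
    congr 1
    · rw [eval_map]
      exact evB_homComp x k
    · rw [eval_map]
      rw [show (eval₂ (algebraMap ℚ K) x) = ⇑(eval₂Hom (algebraMap ℚ K) x) from rfl]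
      rw [hmat_map (eval₂Hom (algebraMap ℚ K) x) (N - k) (Agen r)]
      congr 1
      refine Matrix.ext fun i j => ?_
      rw [Matrix.map_apply, show (Agen r) i j = X (i, j) from rfl, eval₂Hom_X', Matrix.of_apply]
  rw [Finset.sum_congr rfl hterm, num_coeff, if_neg hN]
  simp

lemma coeff_identity (r : ℕ) (e : (Fin r × Fin r) →₀ ℕ) :
    ∑ p ∈ Finset.HasAntidiagonal.antidiagonal e,
        coeff p.1 (Dgen r) * coeff p.2 (hmat (∑ i, p.2 i) (Agen r)) =
      if e = 0 then 1 else 0 := by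
  set N := ∑ i, e i with hNdef
  set D := Dgen r with hD
  set T : MvPolynomial (Fin r × Fin r) ℚ :=
    ∑ m ∈ Finset.range (N + 1), hmat m (Agen r) with hT
  have hsplit : ∀ p ∈ Finset.HasAntidiagonal.antidiagonal e, (∑ i, p.1 i) + (∑ i, p.2 i) = N := by
    intro p hp
    rw [Finset.HasAntidiagonal.mem_antidiagonal] at hp
    rw [hNdef, ← hp, ← Finset.sum_add_distrib]
    exact Finset.sum_congr rfl fun i _ => (Finsupp.add_apply p.1 p.2 i).symm
  -- replace summand by coeff p.2 T
  have hstep1 : ∀ p ∈ Finset.HasAntidiagonal.antidiagonal e,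
      coeff p.1 D * coeff p.2 (hmat (∑ i, p.2 i) (Agen r)) = coeff p.1 D * coeff p.2 T := by
    intro p hp
    congr 1
    rw [hT, coeff_sum, Finset.sum_eq_single (∑ i, p.2 i)]
    · intro m _ hne
      refine (hmat_isHomogeneous (Agen r) (Agen_hom r) m).coeff_eq_zero ?_
      rw [degree_eq_sum_univ]
      exact fun h => hne h.symm
    · intro habs
      exfalso
      apply habs
      rw [Finset.mem_range]
      have := hsplit p hp
      omega
  rw [Finset.sum_congr rfl hstep1, ← MvPolynomial.coeff_mul]
  -- split D into low and high parts
  set Dlow : MvPolynomial (Fin r × Fin r) ℚ :=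
    ∑ k ∈ Finset.range (N + 1), homogeneousComponent k D with hDlow
  have hDsum : D = Dlow + (D - Dlow) := by ring
  rw [hDsum, add_mul, coeff_add]
  have hhigh : coeff e ((D - Dlow) * T) = 0 := by
    rw [MvPolynomial.coeff_mul]
    apply Finset.sum_eq_zero
    intro p hp
    have h1 : (∑ i, p.1 i) ≤ N := by
      have := hsplit p hp
      omega
    have hc : coeff p.1 (D - Dlow) = 0 := by
      rw [coeff_sub, hDlow, coeff_sum]
      simp_rw [coeff_homogeneousComponent]
      rw [Finset.sum_ite_eq, if_pos (Finset.mem_range.mpr (by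
        rw [degree_eq_sum_univ]
        omega))]
      exact sub_self _
    rw [hc, zero_mul]
  rw [hhigh, add_zero]
  -- expand the low part
  have hlow : coeff e (Dlow * T) =
      ∑ k ∈ Finset.range (N + 1), coeff e (homogeneousComponent k D * hmat (N - k) (Agen r)) := by
    rw [hDlow, Finset.sum_mul, coeff_sum]
    refine Finset.sum_congr rfl fun k hk => ?_
    rw [hT, Finset.mul_sum, coeff_sum, Finset.sum_eq_single (N - k)]
    · intro m _ hm
      refine ((homogeneousComponent_isHomogeneous k D).mul
        (hmat_isHomogeneous (Agen r) (Agen_hom r) m)).coeff_eq_zero ?_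
      rw [degree_eq_sum_univ, ← hNdef]
      rw [Finset.mem_range] at hk
      omega
    · intro habs
      exfalso
      exact habs (Finset.mem_range.mpr (by omega))
  rw [hlow]
  by_cases hN0 : N = 0
  · have he0 : e = 0 := by
      ext i
      have hle : e i ≤ N := by
        rw [hNdef]
        exact Finset.single_le_sum (fun _ _ => Nat.zero_le _) (Finset.mem_univ i)
      simpa using Nat.le_antisymm (hN0 ▸ hle) (Nat.zero_le _)
    rw [if_pos he0]
    have h00 : ∑ k ∈ Finset.range (N + 1),
        coeff e (homogeneousComponent k D * hmat (N - k) (Agen r)) =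
        coeff e (homogeneousComponent 0 D * hmat 0 (Agen r)) := by
      rw [hN0, Finset.range_one, Finset.sum_singleton]
    rw [h00, homogeneousComponent_zero, hD, coeff_zero_Dgen, hmat_zero, mul_one, he0]
    simp
  · have hee : e ≠ 0 := by
      intro h
      apply hN0
      rw [hNdef, h]
      simp
    rw [← coeff_sum, hD, W_eq r N hN0, if_neg hee]
    simp

end WEq

end MacMahonAux

/-- Classical MacMahon Master Theorem (boson–fermion correspondence) for the generic
`r × r` matrix `A = (a_{ij})`: `1/det(I - A) = ∑_{n ≥ 0} tr Sⁿ(A)`, where `tr Sⁿ(A)` is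
the trace of the action induced by `x_i ↦ ∑_j a_{ij} x_j` on the degree-`n` homogeneous
polynomials (the `n`-th symmetric power).  Both sides are formal power series in the
entries `a_{ij}`; since `tr Sⁿ(A)` is homogeneous of degree `n`, the sum `∑_n tr Sⁿ(A)`
is the power series whose coefficient at a monomial of degree `n` is the corresponding
coefficient of `tr Sⁿ(A)`, and the identity reads `det(I-A) ⬝ (∑_n tr Sⁿ(A)) = 1`. -/
theorem macmahon_master_theorem (r : ℕ) :
    let A : Matrix (Fin r) (Fin r) (MvPolynomial (Fin r × Fin r) ℚ) :=
      fun i j => MvPolynomial.X (i, j)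
    let φ := MvPolynomial.aeval
      (R := MvPolynomial (Fin r × Fin r) ℚ)
      (fun i : Fin r => ∑ j : Fin r,
        MvPolynomial.C (A i j) * (MvPolynomial.X j :
          MvPolynomial (Fin r) (MvPolynomial (Fin r × Fin r) ℚ)))
    let trS : ℕ → MvPolynomial (Fin r × Fin r) ℚ := fun n =>
      ∑ d ∈ Finset.univ.filter (fun d : Fin r → Fin (n + 1) => ∑ i, (d i : ℕ) = n),
        MvPolynomial.coeff (Finsupp.equivFunOnFinite.symm fun i => (d i : ℕ))
          (φ (MvPolynomial.monomial (Finsupp.equivFunOnFinite.symm fun i => (d i : ℕ)) 1))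
    let sumTrS : MvPowerSeries (Fin r × Fin r) ℚ :=
      fun e => MvPolynomial.coeff e (trS (e.sum fun _ m => m))
    let detPS : MvPowerSeries (Fin r × Fin r) ℚ :=
      fun e => MvPolynomial.coeff e (1 - A).det
    detPS * sumTrS = 1 := by
  intro A φ trS sumTrS detPS
  apply MvPowerSeries.ext
  intro e
  rw [MvPowerSeries.coeff_mul, MvPowerSeries.coeff_one]
  have hsum : ∀ p ∈ Finset.HasAntidiagonal.antidiagonal e,
      (MvPowerSeries.coeff p.1) detPS * (MvPowerSeries.coeff p.2) sumTrS =
        MvPolynomial.coeff p.1 (MacMahonAux.Dgen r) *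
          MvPolynomial.coeff p.2
            (MacMahonAux.hmat (∑ i, p.2 i) (MacMahonAux.Agen r)) := by
    intro p _
    rw [MvPowerSeries.coeff_apply, MvPowerSeries.coeff_apply]
    congr 1
    show MvPolynomial.coeff p.2 (trS (p.2.sum fun _ m => m)) = _
    rw [show (p.2.sum fun _ m => m) = ∑ i, p.2 i from
      Finsupp.sum_fintype _ _ fun _ => rfl]
    exact congrArg (MvPolynomial.coeff p.2)
      (MacMahonAux.trS_eq_hmat (MacMahonAux.Agen r) (∑ i, p.2 i))
  rw [Finset.sum_congr rfl hsum, MacMahonAux.coeff_identity r e]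
end

section
/- Let w be a word over {1,...,r} with unique Lyndon factorization w = l_1 l_2 ... l_n (l_1 ≥ l_2 ≥ ... ≥ l_n). Then β_dec(w) := β_circ(l_1)···β_circ(l_n), where β_circ(x_1...x_m) = b_{x_1 x_2} b_{x_2 x_3} ··· b_{x_m x_1}, defines a map from words to monomials in commuting variables b_{ij}, and ∑_{w} β_dec(w) over all words w equals ∏_{c nonperiodic cycle of K_r} 1/(1 - β(c)) as formal power series. -/
/-- A word is Lyndon if it is nonempty and strictly lexicographically smaller than all
of its nontrivial cyclic rotations.  Nonperiodic cycles of the complete digraph `K_r`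
correspond bijectively to Lyndon words. -/
def IsLyndon {α : Type*} [LinearOrder α] (w : List α) : Prop :=
  w ≠ [] ∧ ∀ k, 0 < k → k < w.length → List.Lex (· < ·) w (w.rotate k)

/-- `β_circ(x₁…x_m) = b_{x₁x₂} b_{x₂x₃} ⋯ b_{x_m x₁}` (and `β_circ` of the empty word
is `1`), realized with the generic edge variables `b_{ij} = X (i,j)`. -/
noncomputable def betaCirc {r : ℕ} (w : List (Fin r)) : MvPowerSeries (Fin r × Fin r) ℚ :=
  ((w.zip (w.rotate 1)).map fun e => MvPowerSeries.X e).prod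

noncomputable instance {σ : Type*} : TopologicalSpace (MvPowerSeries σ ℚ) :=
  @Pi.topologicalSpace (σ →₀ ℕ) (fun _ => ℚ) (fun _ => ⊥)

set_option linter.unusedSectionVars false

/-! ### Auxiliary lemmas on lexicographic order of lists -/

namespace LyndonAux
variable {α : Type*} [LinearOrder α]

theorem lex_iff_lt {a b : List α} : List.Lex (· < ·) a b ↔ a < b := Iff.rfl

theorem lt_of_append_lt_left {u v w : List α} (h : List.Lex (· < ·) (u ++ v) (u ++ w)) :
    List.Lex (· < ·) v w := by
  induction u with
  | nil => exact h
  | cons a u ih => exact ih (List.lex_cons_iff.1 h)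

theorem lex_append {a b : List α} (h : List.Lex (· < ·) a b) (hl : a.length = b.length)
    (x y : List α) : List.Lex (· < ·) (a ++ x) (b ++ y) := by
  induction h with
  | nil => simp at hl
  | rel hab => exact List.Lex.rel hab
  | cons h ih => exact List.Lex.cons (ih (by simpa using hl))

theorem not_lex_append_self (a t : List α) : ¬ List.Lex (· < ·) (a ++ t) a := by
  induction a with
  | nil => exact List.not_lex_nil
  | cons c a ih => intro h; exact ih (List.lex_cons_iff.1 h)

theorem not_lt_of_prefix {a b : List α} (h : a <+: b) : ¬ b < a := by
  obtain ⟨t, rfl⟩ := h; exact not_lex_append_self a t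

theorem lex_append_of_not_prefix {a b : List α} (h : List.Lex (· < ·) a b)
    (hp : ¬ a <+: b) (x : List α) : List.Lex (· < ·) (a ++ x) b := by
  induction h with
  | nil => exact absurd (List.nil_prefix) hp
  | rel hab => exact List.Lex.rel hab
  | @cons a l1 l2 h ih =>
      exact List.Lex.cons (ih fun hc => hp (List.cons_prefix_cons.2 ⟨rfl, hc⟩))

theorem IsLyndon.lt_suffix {w u v : List α} (hw : IsLyndon w) (heq : w = u ++ v)
    (hu : u ≠ []) (hv : v ≠ []) : List.Lex (· < ·) w v := by
  have hul : 0 < u.length := List.length_pos_iff.2 hu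
  have hvl : 0 < v.length := List.length_pos_iff.2 hv
  have hlen : w.length = u.length + v.length := by rw [heq, List.length_append]
  have hrot1 : w.rotate u.length = v ++ u := by
    rw [heq, List.rotate_eq_drop_append_take (by simp), List.drop_left, List.take_left]
  have h1 : List.Lex (· < ·) w (v ++ u) := hrot1 ▸ hw.2 u.length hul (by omega)
  set p := w.take v.length with hp
  set s := w.drop v.length with hs
  have hps : w = p ++ s := (List.take_append_drop _ _).symm
  have hplen : p.length = v.length := by
    rw [hp, List.length_take]; omega
  rcases lt_trichotomy p v with hlt | heqpv | hgt
  · have := lex_append (lex_iff_lt.2 hlt) hplen s []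
    rw [List.append_nil] at this
    exact hps ▸ this
  · exfalso
    have hslen : s.length = u.length := by rw [hs, List.length_drop]; omega
    have hsu : List.Lex (· < ·) s u := by
      apply lt_of_append_lt_left (u := v)
      have hvw : v ++ s = w := by rw [← heqpv, ← hps]
      rw [hvw]; exact h1
    have hrot2 : w.rotate v.length = s ++ v := by
      rw [List.rotate_eq_drop_append_take (by omega), ← hs, ← hp, heqpv]
    have h2 : List.Lex (· < ·) w (s ++ v) := hrot2 ▸ hw.2 v.length hvl (by omega)
    have h3 : List.Lex (· < ·) (s ++ v) w := by
      have := lex_append hsu hslen v v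
      rw [← heq] at this; exact this
    exact absurd (lt_trans (lex_iff_lt.1 h2) (lex_iff_lt.1 h3)) (lt_irrefl w)
  · exfalso
    have h4 : List.Lex (· < ·) (v ++ u) (p ++ s) := lex_append (lex_iff_lt.2 hgt) hplen.symm u s
    rw [← hps] at h4
    exact absurd (lt_trans (lex_iff_lt.1 h1) (lex_iff_lt.1 h4)) (lt_irrefl w)

theorem keyB {w : List α} (hw : IsLyndon w) :
    ∀ (t : List (List α)), (∀ c ∈ t, c ≠ [] ∧ ¬ List.Lex (· < ·) w c) →
    ∀ s r : List α, s <:+ w → s ≠ [] → ¬ List.Lex (· < ·) s w → List.Lex (· < ·) s r →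
      r <+: t.flatten → r.length < w.length → False := by
  intro t
  induction t with
  | nil =>
    intro _ s r _ _ _ hsr hr _
    rw [List.flatten_nil, List.prefix_nil] at hr
    subst hr
    exact List.not_lex_nil hsr
  | cons c t ih =>
    intro hbound s r hsw hsne hnsw hsr hr hrlen
    obtain ⟨hcne, hcw⟩ := hbound c List.mem_cons_self
    rw [List.flatten_cons] at hr
    have hwles : (w : List α) ≤ s := not_lt.1 hnsw
    have hclew : (c : List α) ≤ w := not_lt.1 hcw
    by_cases hlen : r.length ≤ c.length
    · have hrc : r <+: c := List.prefix_of_prefix_length_le hr (List.prefix_append _ _) hlen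
      have hrlec : (r : List α) ≤ c := not_lt.1 (not_lt_of_prefix hrc)
      exact absurd (lt_of_lt_of_le (lex_iff_lt.1 hsr)
        (le_trans hrlec (le_trans hclew hwles))) (lt_irrefl s)
    · push_neg at hlen
      have hcr : c <+: r := List.prefix_of_prefix_length_le (List.prefix_append _ _) hr hlen.le
      obtain ⟨r', rfl⟩ := hcr
      have hr' : r' <+: t.flatten := by
        obtain ⟨z, hz⟩ := hr
        rw [List.append_assoc] at hz
        exact ⟨z, List.append_cancel_left hz⟩
      have hclen : 0 < c.length := List.length_pos_iff.2 hcne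
      by_cases hpre : c <+: s
      · obtain ⟨s', rfl⟩ := hpre
        have hs'r' : List.Lex (· < ·) s' r' := lt_of_append_lt_left hsr
        have hs'ne : s' ≠ [] := by
          rintro rfl
          have hsc : (c ++ [] : List α) ≤ w := by simpa using hclew
          have : w = c ++ [] := le_antisymm hwles hsc
          have := congrArg List.length this
          simp at this
          rw [List.length_append] at hrlen
          omega
        have hs'suf : s' <:+ w := (List.suffix_append c s').trans hsw
        have hs'lenw : s'.length < w.length := by
          have := hsw.sublist.length_le
          rw [List.length_append] at this
          omega
        have hns'w : ¬ List.Lex (· < ·) s' w := by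
          obtain ⟨u, hu⟩ := hs'suf
          have hune : u ≠ [] := by
            rintro rfl
            simp at hu
            subst hu; omega
          exact fun hcon => absurd (lt_trans (lex_iff_lt.1 hcon)
            (lex_iff_lt.1 (IsLyndon.lt_suffix hw hu.symm hune hs'ne))) (lt_irrefl _)
        have hr'len : r'.length < w.length := by
          rw [List.length_append] at hrlen; omega
        exact ih (fun c' hc' => hbound c' (List.mem_cons_of_mem _ hc'))
          s' r' hs'suf hs'ne hns'w hs'r' hr' hr'len
      · have hcs : List.Lex (· < ·) c s := by
          rcases lt_or_eq_of_le (le_trans hclew hwles) with h | h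
          · exact lex_iff_lt.2 h
          · exact absurd (h ▸ List.prefix_refl c) hpre
        have := lex_append_of_not_prefix hcs hpre r'
        exact absurd (lt_trans (lex_iff_lt.1 hsr) (lex_iff_lt.1 this)) (lt_irrefl s)

theorem head_eq {a b : List α} {A : List α} {t' : List (List α)}
    (ha : IsLyndon a) (hb : IsLyndon b)
    (hbt : ∀ c ∈ t', c ≠ [] ∧ ¬ List.Lex (· < ·) b c)
    (hlen : b.length ≤ a.length) (heq : a ++ A = b ++ t'.flatten) : a = b := by
  have h1 : b <+: a ++ A := by rw [heq]; exact List.prefix_append _ _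
  have hpre : b <+: a := List.prefix_of_prefix_length_le h1 (List.prefix_append _ _) hlen
  obtain ⟨r, rfl⟩ := hpre
  rcases eq_or_ne r [] with rfl | hrne
  · simp
  · exfalso
    have hblea : (b : List α) ≤ b ++ r := not_lt.1 (not_lex_append_self b r)
    have hwr : List.Lex (· < ·) (b ++ r) r := IsLyndon.lt_suffix ha rfl hb.1 hrne
    have hft : r <+: t'.flatten := by
      rw [List.append_assoc] at heq
      exact ⟨A, List.append_cancel_left heq⟩
    have hbound : ∀ c ∈ t', c ≠ [] ∧ ¬ List.Lex (· < ·) (b ++ r) c := by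
      intro c hc
      refine ⟨(hbt c hc).1, ?_⟩
      have h1 : (c : List α) ≤ b := not_lt.1 (hbt c hc).2
      exact not_lt.2 (le_trans h1 hblea)
    have hrlen : r.length < (b ++ r).length := by
      rw [List.length_append]
      have := List.length_pos_iff.2 hb.1
      omega
    exact keyB ha t' hbound (b ++ r) r (List.suffix_refl _)
      (fun hc => hb.1 (List.append_eq_nil_iff.1 hc).1)
      (fun h => lt_irrefl _ (lex_iff_lt.1 h)) hwr hft hrlen

instance : IsTrans (List α) (fun x y => ¬ List.Lex (· < ·) x y) :=
  ⟨fun x y z hxy hyz => by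
    rw [lex_iff_lt, not_lt] at *
    exact le_trans hyz hxy⟩

theorem factorization_unique :
    ∀ (s t : List (List α)), (∀ l ∈ s, IsLyndon l) → (∀ l ∈ t, IsLyndon l) →
      s.Chain' (fun x y => ¬ List.Lex (· < ·) x y) →
      t.Chain' (fun x y => ¬ List.Lex (· < ·) x y) →
      s.flatten = t.flatten → s = t := by
  intro s
  induction s with
  | nil =>
    intro t _ ht _ _ h
    cases t with
    | nil => rfl
    | cons c t =>
      exfalso
      rw [List.flatten_nil, List.flatten_cons] at h
      have := (ht c List.mem_cons_self).1
      rcases List.append_eq_nil_iff.1 h.symm with ⟨h1, _⟩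
      exact this h1
  | cons a s ih =>
    intro t hs ht hcs hct h
    cases t with
    | nil =>
      exfalso
      rw [List.flatten_nil, List.flatten_cons] at h
      have := (hs a List.mem_cons_self).1
      rcases List.append_eq_nil_iff.1 h with ⟨h1, _⟩
      exact this h1
    | cons b t =>
      rw [List.flatten_cons, List.flatten_cons] at h
      have hpair_t : ∀ c ∈ t, ¬ List.Lex (· < ·) b c := by
        have := List.isChain_iff_pairwise.1 hct
        exact fun c hc => (List.pairwise_cons.1 this).1 c hc
      have hpair_s : ∀ c ∈ s, ¬ List.Lex (· < ·) a c := by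
        have := List.isChain_iff_pairwise.1 hcs
        exact fun c hc => (List.pairwise_cons.1 this).1 c hc
      have hab : a = b := by
        rcases le_total b.length a.length with h' | h'
        · exact head_eq (hs a (by simp)) (ht b (by simp))
            (fun c hc => ⟨(ht c (by simp [hc])).1, hpair_t c hc⟩) h' h
        · exact (head_eq (ht b (by simp)) (hs a (by simp))
            (fun c hc => ⟨(hs c (by simp [hc])).1, hpair_s c hc⟩) h' h.symm).symm
      subst hab
      have h2 : s.flatten = t.flatten := List.append_cancel_left h
      rw [ih t (fun l hl => hs l (by simp [hl])) (fun l hl => ht l (by simp [hl]))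
        hcs.tail hct.tail h2]

theorem map_val_pmap_mk {β : Type*} {p : β → Prop} :
    ∀ (l : List β) (H : ∀ a ∈ l, p a), (List.pmap Subtype.mk l H).map Subtype.val = l := by
  intro l
  induction l with
  | nil => intro H; rfl
  | cons a l ih => intro H; simp [List.pmap, ih]

theorem pmap_mk_map_val {β : Type*} {p : β → Prop} :
    ∀ (L : List {x // p x}) (H : ∀ a ∈ L.map Subtype.val, p a),
      List.pmap Subtype.mk (L.map Subtype.val) H = L := by
  intro L
  induction L with
  | nil => intro H; rfl
  | cons a L ih =>
    intro H
    show Subtype.mk (Subtype.val a) _ :: List.pmap Subtype.mk (L.map Subtype.val) _ = a :: L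
    exact congrArg₂ List.cons (Subtype.coe_eta a _) (ih _)

end LyndonAux

/-! ### Coefficient lemmas for multivariate power series -/

namespace PSAux
open MvPowerSeries
variable {σ : Type*} [DecidableEq σ]

noncomputable def wt (d : σ →₀ ℕ) : ℕ := d.sum fun _ n => n

theorem wt_add (u v : σ →₀ ℕ) : wt (u + v) = wt u + wt v :=
  Finsupp.sum_add_index' (fun _ => rfl) (fun _ _ _ => rfl)

theorem wt_single (i : σ) (n : ℕ) : wt (Finsupp.single i n) = n :=
  Finsupp.sum_single_index rfl

theorem wt_eq_zero {d : σ →₀ ℕ} (h : wt d = 0) : d = 0 := by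
  ext i
  by_cases hi : i ∈ d.support
  · exact Finset.sum_eq_zero_iff.1 h i hi
  · simpa using hi

theorem wt_mono {e d : σ →₀ ℕ} (h : e ≤ d) : wt e ≤ wt d := by
  obtain ⟨c, rfl⟩ := le_iff_exists_add.1 h
  rw [wt_add]; omega

theorem coeff_mul_eq_zero_left {d : σ →₀ ℕ} {a b : MvPowerSeries σ ℚ}
    (h : ∀ e ≤ d, coeff e a = 0) : coeff d (a * b) = 0 := by
  rw [coeff_mul]
  refine Finset.sum_eq_zero fun p hp => ?_
  rw [Finset.HasAntidiagonal.mem_antidiagonal] at hp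
  rw [h p.1 (hp ▸ le_self_add), zero_mul]

theorem coeff_mul_congr {d : σ →₀ ℕ} {a a' b b' : MvPowerSeries σ ℚ}
    (ha : ∀ e ≤ d, coeff e a = coeff e a') (hb : ∀ e ≤ d, coeff e b = coeff e b') :
    ∀ e ≤ d, coeff e (a * b) = coeff e (a' * b') := by
  intro e he
  rw [coeff_mul, coeff_mul]
  refine Finset.sum_congr rfl fun p hp => ?_
  rw [Finset.HasAntidiagonal.mem_antidiagonal] at hp
  rw [ha p.1 (le_trans (hp ▸ le_self_add) he), hb p.2 (le_trans (hp ▸ le_add_self) he)]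

theorem coeff_prod_congr {ι : Type*} {d : σ →₀ ℕ} (s : Finset ι) (f g : ι → MvPowerSeries σ ℚ)
    (h : ∀ i ∈ s, ∀ e ≤ d, coeff e (f i) = coeff e (g i)) :
    ∀ e ≤ d, coeff e (∏ i ∈ s, f i) = coeff e (∏ i ∈ s, g i) := by
  classical
  induction s using Finset.induction with
  | empty => intro e _; rfl
  | @insert x s' hx ih =>
    rw [Finset.prod_insert hx, Finset.prod_insert hx]
    exact coeff_mul_congr (h x (by simp)) (ih fun i hi => h i (by simp [hi]))

def OrdGE (k : ℕ) (f : MvPowerSeries σ ℚ) : Prop := ∀ e : σ →₀ ℕ, wt e < k → coeff e f = 0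

theorem ordGE_mul {j k : ℕ} {a b : MvPowerSeries σ ℚ} (hj : OrdGE j a) (hk : OrdGE k b) :
    OrdGE (j + k) (a * b) := by
  intro e he
  rw [coeff_mul]
  refine Finset.sum_eq_zero fun p hp => ?_
  rw [Finset.HasAntidiagonal.mem_antidiagonal] at hp
  have hwt : wt p.1 + wt p.2 = wt e := by rw [← wt_add, hp]
  rcases lt_or_ge (wt p.1) j with h | h
  · rw [hj p.1 h, zero_mul]
  · rw [hk p.2 (by omega), mul_zero]

theorem ordGE_zero (a : MvPowerSeries σ ℚ) : OrdGE 0 a := fun _ h => absurd h (by omega)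

theorem ordGE_one {x : MvPowerSeries σ ℚ} (hx : constantCoeff x = 0) : OrdGE 1 x := by
  intro e he
  have h0 : e = 0 := wt_eq_zero (by omega)
  subst h0
  rw [coeff_zero_eq_constantCoeff]
  exact hx

theorem ordGE_pow {x : MvPowerSeries σ ℚ} (hx : constantCoeff x = 0) (n : ℕ) :
    OrdGE n (x ^ n) := by
  induction n with
  | zero => exact ordGE_zero _
  | succ n ih =>
    rw [pow_succ]
    exact (by simpa using ordGE_mul ih (ordGE_one hx) : OrdGE (n + 1) (x ^ n * x))

theorem const_one_sub {x : MvPowerSeries σ ℚ} (hx : constantCoeff x = 0) :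
    constantCoeff (1 - x) ≠ 0 := by
  rw [map_sub, map_one, hx, sub_zero]; exact one_ne_zero

theorem geom_partial (x : MvPowerSeries σ ℚ) (N : ℕ) :
    (1 - x) * (∑ n ∈ Finset.range (N + 1), x ^ n) = 1 - x ^ (N + 1) := by
  linear_combination (-1 : MvPowerSeries σ ℚ) * geom_sum_mul x (N + 1)

theorem inv_sub_partial {x : MvPowerSeries σ ℚ} (hx : constantCoeff x = 0) (N : ℕ) :
    (1 - x)⁻¹ - (∑ n ∈ Finset.range (N + 1), x ^ n) = (1 - x)⁻¹ * x ^ (N + 1) := by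
  have h1 : (1 - x) * (1 - x)⁻¹ = 1 := MvPowerSeries.mul_inv_cancel _ (const_one_sub hx)
  have h2 := geom_partial x N
  linear_combination (∑ n ∈ Finset.range (N + 1), x ^ n) * h1 - (1 - x)⁻¹ * h2

theorem coeff_inv_eq_partial {x : MvPowerSeries σ ℚ} (hx : constantCoeff x = 0)
    {e : σ →₀ ℕ} {N : ℕ} (he : wt e ≤ N) :
    coeff e (1 - x)⁻¹ = coeff e (∑ n ∈ Finset.range (N + 1), x ^ n) := by
  have h := congrArg (coeff e) (inv_sub_partial hx N)
  rw [map_sub] at h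
  have hz : coeff e ((1 - x)⁻¹ * x ^ (N + 1)) = 0 := by
    rw [mul_comm]
    have := ordGE_pow hx (N + 1)
    exact coeff_mul_eq_zero_left fun e' he' => this e' (by
      have := wt_mono he'; omega)
  rw [hz] at h
  linarith [h]

theorem coeff_inv_one_eq {x : MvPowerSeries σ ℚ} (hx : constantCoeff x = 0)
    {d : σ →₀ ℕ} (h : ∀ e ≤ d, coeff e x = 0) :
    ∀ e ≤ d, coeff e (1 - x)⁻¹ = coeff e 1 := by
  intro e he
  have hz : coeff e ((1 - x)⁻¹ * x) = 0 := by
    rw [mul_comm]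
    exact coeff_mul_eq_zero_left fun e' he' => h e' (le_trans he' he)
  have h0 := congrArg (coeff e) (inv_sub_partial hx 0)
  rw [map_sub] at h0
  simp only [zero_add, Finset.range_one, Finset.sum_singleton, pow_zero, pow_one] at h0
  rw [hz] at h0
  linarith [h0]

end PSAux

/-! ### Convergence lemmas for the product topology with discrete coefficients -/

namespace TopAux
open MvPowerSeries

theorem tendsto_of_eventually {σ X : Type*} {F : Filter X} {f : X → MvPowerSeries σ ℚ}
    {P : MvPowerSeries σ ℚ} (h : ∀ d, ∀ᶠ x in F, f x d = P d) :
    Filter.Tendsto f F (nhds P) := by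
  letI : TopologicalSpace ℚ := ⊥
  refine tendsto_pi_nhds.mpr fun d => ?_
  exact tendsto_nhds_of_eventually_eq (h d)

instance {σ : Type*} : T2Space (MvPowerSeries σ ℚ) := by
  letI : TopologicalSpace ℚ := ⊥
  haveI : DiscreteTopology ℚ := ⟨rfl⟩
  exact @Pi.t2Space (σ →₀ ℕ) (fun _ => ℚ) _ (fun _ => inferInstance)

variable {σ : Type*} [DecidableEq σ]

theorem hasProd_mv {ι : Type*} (f : ι → MvPowerSeries σ ℚ) (D : (σ →₀ ℕ) → Finset ι)
    (hD : ∀ d, ∀ i ∉ D d, ∀ e ≤ d, coeff e (f i) = coeff e 1) :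
    HasProd f (fun d => coeff d (∏ i ∈ D d, f i)) := by
  classical
  apply tendsto_of_eventually
  intro d
  filter_upwards [Filter.eventually_ge_atTop (D d)] with s hs
  show coeff d (∏ i ∈ s, f i) = _
  rw [← Finset.prod_sdiff hs, mul_comm]
  have hT : ∀ e ≤ d, coeff e (∏ i ∈ s \ D d, f i) = coeff e (1 : MvPowerSeries σ ℚ) := by
    refine Finset.prod_induction f (fun g => ∀ e ≤ d, coeff e g = coeff e 1) ?_
      (fun e _ => rfl) ?_
    · intro x y hx hy e he
      have := PSAux.coeff_mul_congr hx hy e he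
      rwa [one_mul] at this
    · intro i hi
      exact hD d i (Finset.mem_sdiff.1 hi).2
  have := PSAux.coeff_mul_congr (a := ∏ i ∈ D d, f i) (a' := ∏ i ∈ D d, f i)
    (fun e (_ : e ≤ d) => rfl) hT d le_rfl
  rwa [mul_one] at this

theorem hasSum_mv {ι : Type*} (f : ι → MvPowerSeries σ ℚ) (P : MvPowerSeries σ ℚ)
    (h : ∀ d, ∃ S : Finset ι, (∀ i ∉ S, coeff d (f i) = 0) ∧
      ∑ i ∈ S, coeff d (f i) = P d) : HasSum f P := by
  apply tendsto_of_eventually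
  intro d
  obtain ⟨S, hS0, hSsum⟩ := h d
  filter_upwards [Filter.eventually_ge_atTop S] with s hs
  show coeff d (∑ i ∈ s, f i) = P d
  rw [map_sum, ← hSsum]
  exact (Finset.sum_subset hs fun i _ hi => hS0 i hi).symm

end TopAux

/-! ### Facts about `betaCirc` -/

namespace BetaAux
open MvPowerSeries

theorem coeff_listX {σ : Type*} [DecidableEq σ] :
    ∀ (L : List σ) (e : σ →₀ ℕ),
      coeff e ((L.map fun i => (X i : MvPowerSeries σ ℚ)).prod) ≠ 0 → PSAux.wt e = L.length := by
  intro L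
  induction L with
  | nil =>
    intro e h
    simp only [List.map_nil, List.prod_nil] at h
    rw [coeff_one] at h
    have : e = 0 := by by_contra hc; exact h (if_neg hc)
    subst this
    simp [PSAux.wt]
  | cons i L ih =>
    intro e h
    rw [List.map_cons, List.prod_cons, coeff_mul] at h
    obtain ⟨p, hp, hne⟩ := Finset.exists_ne_zero_of_sum_ne_zero h
    rw [Finset.HasAntidiagonal.mem_antidiagonal] at hp
    have h1 : coeff p.1 (X i : MvPowerSeries σ ℚ) ≠ 0 := fun hc => hne (by rw [hc, zero_mul])
    have h2 : coeff p.2 ((L.map fun i => (X i : MvPowerSeries σ ℚ)).prod) ≠ 0 :=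
      fun hc => hne (by rw [hc, mul_zero])
    rw [coeff_X] at h1
    have hp1 : p.1 = Finsupp.single i 1 := by by_contra hc; exact h1 (if_neg hc)
    have := ih p.2 h2
    rw [← hp, PSAux.wt_add, hp1, PSAux.wt_single, List.length_cons]
    omega

theorem betaCirc_wt {r : ℕ} {w : List (Fin r)} {e : (Fin r × Fin r) →₀ ℕ}
    (h : coeff e (betaCirc w) ≠ 0) : PSAux.wt e = w.length := by
  have := coeff_listX (w.zip (w.rotate 1)) e h
  rwa [List.length_zip, List.length_rotate, min_self] at this

theorem betaCirc_const {r : ℕ} {w : List (Fin r)} (hw : w ≠ []) :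
    constantCoeff (betaCirc w) = 0 := by
  by_contra hc
  rw [← coeff_zero_eq_constantCoeff] at hc
  have := betaCirc_wt hc
  have h0 : PSAux.wt (0 : (Fin r × Fin r) →₀ ℕ) = 0 := by simp [PSAux.wt]
  have := List.length_pos_iff.2 hw
  omega

theorem G_coe_list {ι' : Type*} [DecidableEq ι'] {R : Type*} [CommMonoid R] (x : ι' → R) :
    ∀ L : List ι',
      (Multiset.toFinsupp (↑L : Multiset ι')).prod (fun l n => x l ^ n) = (L.map x).prod := by
  intro L
  induction L with
  | nil => simp
  | cons a L ih =>
    have hco : ((a :: L : List ι') : Multiset ι') = {a} + (↑L : Multiset ι') := by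
      simp [Multiset.cons_eq_cons]
    rw [hco, Multiset.toFinsupp_add, Multiset.toFinsupp_singleton,
      Finsupp.prod_add_index' (fun l => pow_zero (x l)) (fun l m n => pow_add (x l) m n),
      Finsupp.prod_single_index (h := fun l n => x l ^ n) (pow_zero _), pow_one, List.map_cons, List.prod_cons, ih]

end BetaAux


/-- If `fact` assigns to each word its (unique) nonincreasing Lyndon factorization,
then with `β_dec(w) := β_circ(l₁) ⋯ β_circ(l_n)` for `fact w = (l₁, …, l_n)`, the sum
of `β_dec(w)` over all words `w` equals the product over all nonperiodic cycles `c` of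
`K_r` of `1/(1 - β(c))`, as formal power series in the commuting variables `b_{ij}`. -/
theorem sum_betaDec_eq_prod_nonperiodic_cycles (r : ℕ)
    (fact : List (Fin r) → List (List (Fin r)))
    (hjoin : ∀ w, (fact w).flatten = w)
    (hlyndon : ∀ w, ∀ l ∈ fact w, IsLyndon l)
    (hsorted : ∀ w, (fact w).Chain' (fun a b => ¬ List.Lex (· < ·) a b)) :
    ∑' w : List (Fin r), ((fact w).map betaCirc).prod
      = ∏' c : {w : List (Fin r) // IsLyndon w}, (1 - betaCirc c.1)⁻¹ := by
  classical
  set ι := {w : List (Fin r) // IsLyndon w} with hι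
  let x : ι → MvPowerSeries (Fin r × Fin r) ℚ := fun l => betaCirc l.1
  let J : ι → MvPowerSeries (Fin r × Fin r) ℚ := fun l => (1 - x l)⁻¹
  have hx0 : ∀ l : ι, MvPowerSeries.constantCoeff (x l) = 0 :=
    fun l => BetaAux.betaCirc_const l.2.1
  -- the finite sets of relevant Lyndon words
  have hfin : ∀ d : (Fin r × Fin r) →₀ ℕ,
      {l : ι | ∃ e ≤ d, MvPowerSeries.coeff e (x l) ≠ 0}.Finite := by
    intro d
    apply Set.Finite.subset (Set.Finite.preimage (Set.injOn_of_injective Subtype.val_injective)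
      (List.finite_length_le (Fin r) (PSAux.wt d)))
    rintro l ⟨e, hed, hne⟩
    have h1 := BetaAux.betaCirc_wt hne
    have h2 := PSAux.wt_mono hed
    simp only [Set.mem_preimage, Set.mem_setOf_eq]
    omega
  let rel : ((Fin r × Fin r) →₀ ℕ) → Finset ι := fun d => (hfin d).toFinset
  have hrel : ∀ (d) (l : ι), l ∈ rel d ↔ ∃ e ≤ d, MvPowerSeries.coeff e (x l) ≠ 0 :=
    fun d l => Set.Finite.mem_toFinset _
  let P : MvPowerSeries (Fin r × Fin r) ℚ := fun d => MvPowerSeries.coeff d (∏ l ∈ rel d, J l)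
  -- the infinite product
  have hProd : HasProd J P := by
    apply TopAux.hasProd_mv J rel
    intro d i hi e hed
    have hvan : ∀ e' ≤ d, MvPowerSeries.coeff e' (x i) = 0 := by
      intro e' he'
      by_contra hc
      exact hi ((hrel d i).2 ⟨e', he', hc⟩)
    exact PSAux.coeff_inv_one_eq (hx0 i) hvan e hed
  -- the equivalence between words and finitely supported multiplicity functions
  let rel' : ι → ι → Prop := fun a b => ¬ List.Lex (· < ·) a.1 b.1
  haveI hTrans : IsTrans ι rel' := by
    constructor
    intro a b c h1 h2
    have h1' : (b.1 : List (Fin r)) ≤ a.1 := not_lt.1 h1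
    have h2' : (c.1 : List (Fin r)) ≤ b.1 := not_lt.1 h2
    show ¬ List.Lex (· < ·) a.1 c.1
    exact not_lt.2 (le_trans h2' h1')
  haveI hAnti : Std.Antisymm rel' := by
    constructor
    intro a b h1 h2
    have h1' : (b.1 : List (Fin r)) ≤ a.1 := not_lt.1 h1
    have h2' : (a.1 : List (Fin r)) ≤ b.1 := not_lt.1 h2
    exact Subtype.ext (le_antisymm h2' h1')
  haveI hTotal : Std.Total rel' := by
    constructor
    intro a b
    rcases le_total a.1 b.1 with h | h
    · right; show ¬ List.Lex (· < ·) b.1 a.1; exact not_lt.2 h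
    · left; show ¬ List.Lex (· < ·) a.1 b.1; exact not_lt.2 h
  haveI hDec : DecidableRel rel' := Classical.decRel _
  have hpmap : ∀ w, List.Pairwise rel' (List.pmap Subtype.mk (fact w) (hlyndon w)) := by
    intro w
    have hp : List.Pairwise (fun a b => ¬ List.Lex (· < ·) a b) (fact w) :=
      List.isChain_iff_pairwise.1 (hsorted w)
    exact hp.pmap _ (fun a ha b hb h => h)
  let Emap : List (Fin r) → (ι →₀ ℕ) := fun w =>
    Multiset.toFinsupp (↑(List.pmap Subtype.mk (fact w) (hlyndon w)) : Multiset ι)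
  have hEinj : Function.Injective Emap := by
    intro w w' h
    have hmult : (↑(List.pmap Subtype.mk (fact w) (hlyndon w)) : Multiset ι)
        = ↑(List.pmap Subtype.mk (fact w') (hlyndon w')) :=
      Multiset.toFinsupp.injective h
    have hperm := Multiset.coe_eq_coe.1 hmult
    have hlists := List.Perm.eq_of_pairwise' (hpmap w) (hpmap w') hperm
    have hmaps := congrArg (List.map Subtype.val) hlists
    rw [LyndonAux.map_val_pmap_mk, LyndonAux.map_val_pmap_mk] at hmaps
    rw [← hjoin w, ← hjoin w', hmaps]
  have hEsurj : Function.Surjective Emap := by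
    intro m
    set L : List ι := Multiset.sort (Finsupp.toMultiset m) rel' with hL
    refine ⟨(L.map Subtype.val).flatten, ?_⟩
    have hsortL : List.Pairwise rel' L := Multiset.pairwise_sort _ _
    have hfactw : fact ((L.map Subtype.val).flatten) = L.map Subtype.val := by
      apply LyndonAux.factorization_unique
      · exact hlyndon _
      · intro l hl
        obtain ⟨a, _, rfl⟩ := List.mem_map.1 hl
        exact a.2
      · exact hsorted _
      · exact ((List.pairwise_map (f := (Subtype.val : ι → List (Fin r)))
          (R := fun a b : List (Fin r) => ¬ List.Lex (· < ·) a b) (l := L)).2 hsortL).isChain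
      · rw [hjoin]
    have hkey : ∀ (ll : List (List (Fin r))) (hh : ∀ l ∈ ll, IsLyndon l),
        ll = L.map Subtype.val → List.pmap Subtype.mk ll hh = L := by
      rintro ll hh rfl
      exact LyndonAux.pmap_mk_map_val L hh
    show Multiset.toFinsupp (↑(List.pmap Subtype.mk (fact ((L.map Subtype.val).flatten))
      (hlyndon _)) : Multiset ι) = m
    rw [hkey _ _ hfactw, hL, Multiset.sort_eq, Finsupp.toMultiset_toFinsupp]
  let E : List (Fin r) ≃ (ι →₀ ℕ) := Equiv.ofBijective Emap ⟨hEinj, hEsurj⟩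
  let G : (ι →₀ ℕ) → MvPowerSeries (Fin r × Fin r) ℚ := fun m => m.prod fun l n => x l ^ n
  have hFG : ∀ w, ((fact w).map betaCirc).prod = G (Emap w) := by
    intro w
    have hval := LyndonAux.map_val_pmap_mk (fact w) (hlyndon w)
    calc ((fact w).map betaCirc).prod
        = (((List.pmap Subtype.mk (fact w) (hlyndon w)).map Subtype.val).map betaCirc).prod := by
          rw [hval]
      _ = ((List.pmap Subtype.mk (fact w) (hlyndon w)).map x).prod := by rw [List.map_map]; rfl
      _ = G (Emap w) := (BetaAux.G_coe_list x _).symm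
  -- the sum over multiplicity functions
  have hSum : HasSum G P := by
    apply TopAux.hasSum_mv G P
    intro d
    set N := PSAux.wt d with hN
    set S := rel d with hS
    let ψ : (↥S → ℕ) → (ι →₀ ℕ) := fun p => ∑ i : ↥S, Finsupp.single i.1 (p i)
    have hψ_mem : ∀ (p) (i0 : ↥S), ψ p i0.1 = p i0 := by
      intro p i0
      rw [show ψ p = ∑ i : ↥S, Finsupp.single i.1 (p i) from rfl, Finset.sum_apply']
      rw [Finset.sum_eq_single i0]
      · simp [Finsupp.single_apply]
      · intro b _ hb
        rw [Finsupp.single_apply]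
        exact if_neg (fun hc => hb (Subtype.ext hc))
      · intro hi0
        exact absurd (Finset.mem_univ i0) hi0
    have hψ_not : ∀ (p) (l : ι), l ∉ S → ψ p l = 0 := by
      intro p l hl
      rw [show ψ p = ∑ i : ↥S, Finsupp.single i.1 (p i) from rfl, Finset.sum_apply']
      exact Finset.sum_eq_zero fun i _ => by
        rw [Finsupp.single_apply]
        exact if_neg (fun hc => hl (by rw [← hc]; exact i.2))
    have hψinj : Function.Injective ψ := by
      intro p q h
      funext i0
      rw [← hψ_mem p i0, ← hψ_mem q i0, h]
    have hGψ : ∀ p, G (ψ p) = ∏ i : ↥S, x i.1 ^ p i := by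
      intro p
      show (ψ p).prod (fun l n => x l ^ n) = _
      rw [show ψ p = ∑ i : ↥S, Finsupp.single i.1 (p i) from rfl]
      rw [← Finsupp.prod_finset_sum_index (fun l => pow_zero (x l))
        (fun l m n => pow_add (x l) m n)]
      exact Finset.prod_congr rfl fun i _ =>
        Finsupp.prod_single_index (h := fun l n => x l ^ n) (pow_zero _)
    have hGord : ∀ m : ι →₀ ℕ, PSAux.OrdGE (m.sum fun _ n => n) (G m) := by
      intro m
      induction m using Finsupp.induction with
      | zero =>
        have : G 0 = 1 := Finsupp.prod_zero_index
        rw [this, Finsupp.sum_zero_index]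
        exact PSAux.ordGE_zero _
      | single_add a b f haf hb ih =>
        have hGdec : G (Finsupp.single a b + f) = x a ^ b * G f := by
          show (Finsupp.single a b + f).prod (fun l n => x l ^ n) = _
          rw [Finsupp.prod_add_index' (fun l => pow_zero (x l)) (fun l m n => pow_add (x l) m n),
            Finsupp.prod_single_index (h := fun l n => x l ^ n) (pow_zero _)]
        have hsum : ((Finsupp.single a b + f).sum fun _ n => n) = b + (f.sum fun _ n => n) := by
          rw [Finsupp.sum_add_index' (fun _ => rfl) (fun _ _ _ => rfl),
            Finsupp.sum_single_index rfl]
        rw [hGdec, hsum]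
        exact PSAux.ordGE_mul (PSAux.ordGE_pow (hx0 a) b) ih
    refine ⟨(Fintype.piFinset fun _ : ↥S => Finset.range (N + 1)).image ψ, ?_, ?_⟩
    · intro m hm
      by_contra hne
      apply hm
      have hsupp : ∀ l ∈ m.support, l ∈ S := by
        intro l hl
        by_contra hls
        have hvan : ∀ e ≤ d, MvPowerSeries.coeff e (x l) = 0 := fun e he => by
          by_contra hc; exact hls ((hrel d l).2 ⟨e, he, hc⟩)
        have hdecomp := Finsupp.mul_prod_erase m l (fun l n => x l ^ n) hl
        obtain ⟨k, hk⟩ := Nat.exists_eq_succ_of_ne_zero (Finsupp.mem_support_iff.1 hl)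
        apply hne
        show MvPowerSeries.coeff d (m.prod fun l n => x l ^ n) = 0
        rw [← hdecomp, hk]
        have hre : x l ^ (k + 1) * (Finsupp.erase l m).prod (fun l n => x l ^ n)
            = x l * (x l ^ k * (Finsupp.erase l m).prod (fun l n => x l ^ n)) := by ring
        rw [hre]
        exact PSAux.coeff_mul_eq_zero_left hvan
      have hsum_le : (m.sum fun _ n => n) ≤ N := by
        by_contra hgt
        exact hne (hGord m d (by omega))
      have hval : ∀ l : ι, m l ≤ N := by
        intro l
        by_cases hl : l ∈ m.support
        · exact le_trans (Finset.single_le_sum (fun _ _ => Nat.zero_le _) hl) hsum_le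
        · simp [Finsupp.notMem_support_iff.1 hl]
      refine Finset.mem_image.2 ⟨fun i => m i.1, ?_, ?_⟩
      · exact Fintype.mem_piFinset.2 fun i => Finset.mem_range.2 (Nat.lt_succ_of_le (hval i.1))
      · ext l
        by_cases hl : l ∈ S
        · exact hψ_mem _ ⟨l, hl⟩
        · rw [hψ_not _ l hl]
          exact (Finsupp.notMem_support_iff.1 (fun hc => hl (hsupp l hc))).symm
    · rw [Finset.sum_image (fun p _ q _ h => hψinj h)]
      have hstep : ∀ p ∈ (Fintype.piFinset fun _ : ↥S => Finset.range (N + 1)),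
          MvPowerSeries.coeff d (G (ψ p)) = MvPowerSeries.coeff d (∏ i : ↥S, x i.1 ^ p i) := fun p _ => by rw [hGψ]
      rw [Finset.sum_congr rfl hstep, ← map_sum, ← Finset.prod_univ_sum]
      have hcongr := PSAux.coeff_prod_congr (d := d) Finset.univ
        (fun i : ↥S => ∑ n ∈ Finset.range (N + 1), x i.1 ^ n) (fun i : ↥S => J i.1)
        (fun i _ e he =>
          (PSAux.coeff_inv_eq_partial (hx0 i.1) (le_trans (PSAux.wt_mono he) le_rfl)).symm)
        d le_rfl
      rw [hcongr, Finset.prod_coe_sort]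
  -- conclusion
  have hfun : (fun w => ((fact w).map betaCirc).prod) = G ∘ E := funext fun w => hFG w
  have hSum2 : HasSum (fun w => ((fact w).map betaCirc).prod) P := by
    rw [hfun]
    exact (Equiv.hasSum_iff E).2 hSum
  rw [hSum2.tsum_eq]
  exact hProd.tprod_eq.symm
end
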